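/- arXiv:1908.09068 — 8 statements merged into one kernel-verified Lean document; each statement's English description precedes it below -/
import Mathlib

section
/- Let H be a finite type, 𝔐 a finite family of subsets of H, L the meet-closure of 𝔐, and PEC(x) = x \ ⋃{y ∈ L : y ⊊ x} for x ∈ L. Then the family {PEC(x) : x ∈ L, PEC(x) ≠ ∅} of nonempty packet equivalence classes is a set of atomic predicates for 𝔐: every member is nonempty, the members are pairwise disjoint, their union is H, every nonempty P ∈ 𝔐 is a union of members, and the family has minimal cardinality among all families of subsets of H with these four properties. -/
open Set

/-- The meet-closure of a family `𝔐` of subsets of `H`: all intersections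
`⋂₀ S` over subfamilies `S ⊆ 𝔐`, where the empty intersection is `univ`. -/
def meetClosure {H : Type*} (𝔐 : Set (Set H)) : Set (Set H) :=
  {x | ∃ S ⊆ 𝔐, x = ⋂₀ S}

/-- The packet equivalence class of `x`: the elements of `x` not contained in
any strictly smaller element of the meet-closure of `𝔐`. -/
def PEC {H : Type*} (𝔐 : Set (Set H)) (x : Set H) : Set H :=
  x \ ⋃₀ {y ∈ meetClosure 𝔐 | y ⊂ x}


/-- `A` is a set of atomic predicates for `𝔐`: (1) every member is nonempty,
(2) the union of `A` is everything, (3) distinct members are disjoint,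
(4) every nonempty `P ∈ 𝔐` is a union of members of `A`, and
(5) `A` has minimal cardinality among all families satisfying (1)–(4). -/
def IsAtomicPredicates {H : Type*} (𝔐 : Set (Set H)) (A : Set (Set H)) : Prop :=
  (∀ a ∈ A, a.Nonempty) ∧
  ⋃₀ A = Set.univ ∧
  A.Pairwise Disjoint ∧
  (∀ P ∈ 𝔐, P.Nonempty → ∃ B ⊆ A, P = ⋃₀ B) ∧
  ∀ B₀ : Set (Set H),
    (∀ a ∈ B₀, a.Nonempty) → ⋃₀ B₀ = Set.univ → B₀.Pairwise Disjoint →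
    (∀ P ∈ 𝔐, P.Nonempty → ∃ B ⊆ B₀, P = ⋃₀ B) →
    A.ncard ≤ B₀.ncard

namespace PECaux

variable {H : Type*}

/-- The minimal element of the meet-closure containing `h`. -/
def mres (𝔐 : Set (Set H)) (h : H) : Set H := ⋂₀ {P | P ∈ 𝔐 ∧ h ∈ P}

lemma mem_mres (𝔐 : Set (Set H)) (h : H) : h ∈ mres 𝔐 h := fun _P hP => hP.2

lemma mres_mem (𝔐 : Set (Set H)) (h : H) : mres 𝔐 h ∈ meetClosure 𝔐 :=
  ⟨{P | P ∈ 𝔐 ∧ h ∈ P}, fun _P hP => hP.1, rfl⟩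

lemma mres_subset {𝔐 : Set (Set H)} {x : Set H} (hx : x ∈ meetClosure 𝔐) {h : H}
    (hh : h ∈ x) : mres 𝔐 h ⊆ x := by
  obtain ⟨S, hS, rfl⟩ := hx
  intro a ha P hP
  exact ha P ⟨hS hP, hh P hP⟩

lemma mres_subset_of_mem {𝔐 : Set (Set H)} {P : Set H} (hP : P ∈ 𝔐) {h : H} (hh : h ∈ P) :
    mres 𝔐 h ⊆ P := fun _a ha => ha P ⟨hP, hh⟩

lemma pec_eq {𝔐 : Set (Set H)} {x : Set H} (hx : x ∈ meetClosure 𝔐) :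
    PEC 𝔐 x = {h | mres 𝔐 h = x} := by
  ext h
  constructor
  · rintro ⟨hhx, hnot⟩
    by_contra hne
    exact hnot ⟨mres 𝔐 h,
      ⟨mres_mem 𝔐 h, ssubset_of_subset_of_ne (mres_subset hx hhx) hne⟩, mem_mres 𝔐 h⟩
  · intro hm
    refine ⟨hm ▸ mem_mres 𝔐 h, ?_⟩
    rintro ⟨y, ⟨hyL, hysub⟩, hhy⟩
    exact hysub.not_subset (hm ▸ mres_subset hyL hhy)

lemma eq_fiber {𝔐 : Set (Set H)} {s : Set H}
    (hs : s.Nonempty ∧ ∃ x ∈ meetClosure 𝔐, s = PEC 𝔐 x) {h : H} (hh : h ∈ s) :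
    s = {h' | mres 𝔐 h' = mres 𝔐 h} := by
  obtain ⟨-, x, hxL, rfl⟩ := hs
  rw [pec_eq hxL] at hh ⊢
  rw [← hh]

end PECaux

open PECaux

/-- The family of nonempty packet equivalence classes forms the set of
atomic predicates for `𝔐`. -/
theorem nonempty_pecs_isAtomicPredicates {H : Type*} [Fintype H] (𝔐 : Set (Set H)) :
    IsAtomicPredicates 𝔐
      {s : Set H | s.Nonempty ∧ ∃ x ∈ meetClosure 𝔐, s = PEC 𝔐 x} := by
  have hself : ∀ h : H, h ∈ PEC 𝔐 (mres 𝔐 h) := by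
    intro h
    rw [pec_eq (mres_mem 𝔐 h)]
    exact rfl
  refine ⟨fun a ha => ha.1, ?_, ?_, ?_, ?_⟩
  · -- union is univ
    refine eq_univ_of_forall fun h => ?_
    exact ⟨PEC 𝔐 (mres 𝔐 h), ⟨⟨h, hself h⟩, mres 𝔐 h, mres_mem 𝔐 h, rfl⟩, hself h⟩
  · -- pairwise disjoint
    rintro s ⟨-, x, hxL, rfl⟩ t ⟨-, y, hyL, rfl⟩ hst
    rw [Set.disjoint_left]
    intro h hhs hht
    rw [pec_eq hxL] at hhs
    rw [pec_eq hyL] at hht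
    apply hst
    rw [pec_eq hxL, pec_eq hyL, ← hhs, ← hht]
  · -- every nonempty P ∈ 𝔐 is a union of members
    intro P hP _hPne
    refine ⟨{s | ∃ h ∈ P, s = PEC 𝔐 (mres 𝔐 h)}, ?_, ?_⟩
    · rintro s ⟨h, _hhP, rfl⟩
      exact ⟨⟨h, hself h⟩, mres 𝔐 h, mres_mem 𝔐 h, rfl⟩
    · ext h'
      constructor
      · intro hh'P
        exact ⟨PEC 𝔐 (mres 𝔐 h'), ⟨h', hh'P, rfl⟩, hself h'⟩
      · rintro ⟨s, ⟨h, hhP, rfl⟩, hh's⟩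
        rw [pec_eq (mres_mem 𝔐 h)] at hh's
        have hm : h' ∈ mres 𝔐 h := hh's ▸ mem_mres 𝔐 h'
        exact mres_subset_of_mem hP hhP hm
  · -- minimality
    intro B₀ _hBne hBu hBd hBrep
    have hcov : ∀ h : H, ∃ b, b ∈ B₀ ∧ h ∈ b := by
      intro h
      have : h ∈ ⋃₀ B₀ := by rw [hBu]; trivial
      obtain ⟨b, hb, hhb⟩ := this
      exact ⟨b, hb, hhb⟩
    choose pickB hpickB hmemB using hcov
    have huniq : ∀ {b : Set H}, b ∈ B₀ → ∀ {h : H}, h ∈ b → b = pickB h := by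
      intro b hb h hhb
      by_contra hne
      exact Set.disjoint_left.mp (hBd hb (hpickB h) hne) hhb (hmemB h)
    have key : ∀ hA hB : H, pickB hA = pickB hB → hB ∉ mres 𝔐 hA → False := by
      intro hA hB hpe hnot
      have : ∃ P, (P ∈ 𝔐 ∧ hA ∈ P) ∧ hB ∉ P := by
        by_contra hc
        push_neg at hc
        exact hnot fun P hP => hc P hP
      obtain ⟨P, ⟨hP𝔐, hAP⟩, hBP⟩ := this
      obtain ⟨B, hBsub, hPB⟩ := hBrep P hP𝔐 ⟨hA, hAP⟩
      have hAU : hA ∈ ⋃₀ B := hPB ▸ hAP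
      obtain ⟨b', hb'B, hAb'⟩ := hAU
      have hbe : b' = pickB hA := huniq (hBsub hb'B) hAb'
      have hBb' : hB ∈ b' := by
        rw [hbe, hpe]
        exact hmemB hB
      have : hB ∈ P := hPB ▸ ⟨b', hb'B, hBb'⟩
      exact hBP this
    classical
    apply Set.ncard_le_ncard_of_injOn
      (fun a => if ha : a.Nonempty then pickB ha.some else ∅)
    · intro a ha
      show (if h : a.Nonempty then pickB h.some else ∅) ∈ B₀
      rw [dif_pos ha.1]
      exact hpickB _
    · intro a1 ha1 a2 ha2 hfe0
      have hfe : (if h : a1.Nonempty then pickB h.some else ∅)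
          = (if h : a2.Nonempty then pickB h.some else ∅) := hfe0
      rw [dif_pos ha1.1, dif_pos ha2.1] at hfe
      set h1 := ha1.1.some with hh1
      set h2 := ha2.1.some with hh2
      have hm : mres 𝔐 h1 = mres 𝔐 h2 := by
        by_contra hm
        rcases em (h2 ∈ mres 𝔐 h1) with h21 | h21
        · rcases em (h1 ∈ mres 𝔐 h2) with h12 | h12
          · exact hm (subset_antisymm (mres_subset (mres_mem 𝔐 h2) h12)
              (mres_subset (mres_mem 𝔐 h1) h21))
          · exact key h2 h1 hfe.symm h12
        · exact key h1 h2 hfe h21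
      rw [eq_fiber ha1 ha1.1.some_mem, eq_fiber ha2 ha2.1.some_mem, hm]
end

section
/- Let H be a finite type, 𝔐 a finite family of subsets of H, and L its meet-closure. For every x ∈ L, x equals the union of PEC(y) over those y ∈ L with y ⊆ x. In particular, taking x = H, the packet equivalence classes cover H. -/
open Set

lemma pec_key {H : Type*} (𝔐 : Set (Set H)) (h : H) :
    (⋂₀ {P ∈ 𝔐 | h ∈ P}) ∈ meetClosure 𝔐 ∧ h ∈ PEC 𝔐 (⋂₀ {P ∈ 𝔐 | h ∈ P}) := by
  set yh := ⋂₀ {P ∈ 𝔐 | h ∈ P} with hy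
  have hmem : yh ∈ meetClosure 𝔐 := ⟨_, fun P hP => hP.1, rfl⟩
  have hh : h ∈ yh := fun P hP => hP.2
  refine ⟨hmem, hh, ?_⟩
  rintro ⟨z, ⟨⟨T, hT, rfl⟩, hsub⟩, hz⟩
  exact hsub.2 fun a ha P hP => ha P ⟨hT hP, hz P hP⟩

/-- Every element of the meet-closure is the union of the packet equivalence
classes of the lattice elements below it; in particular (taking `x = univ`)
the packet equivalence classes cover `H`. -/
theorem lattice_elem_eq_sUnion_pecs {H : Type*} [Fintype H] (𝔐 : Set (Set H)) :
    (∀ x ∈ meetClosure 𝔐,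
      x = ⋃₀ {s : Set H | ∃ y ∈ meetClosure 𝔐, y ⊆ x ∧ s = PEC 𝔐 y}) ∧
    ⋃₀ {s : Set H | ∃ y ∈ meetClosure 𝔐, s = PEC 𝔐 y} = Set.univ := by
  constructor
  · rintro x ⟨S, hS, rfl⟩
    apply Set.Subset.antisymm
    · intro h hx
      obtain ⟨hmem, hpec⟩ := pec_key 𝔐 h
      refine ⟨PEC 𝔐 (⋂₀ {P ∈ 𝔐 | h ∈ P}), ⟨_, hmem, ?_, rfl⟩, hpec⟩
      exact fun a ha P hP => ha P ⟨hS hP, hx P hP⟩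
    · rintro h ⟨s, ⟨y, hy, hsub, rfl⟩, hh⟩
      exact hsub hh.1
  · apply Set.eq_univ_of_forall
    intro h
    obtain ⟨hmem, hpec⟩ := pec_key 𝔐 h
    exact ⟨_, ⟨_, hmem, rfl⟩, hpec⟩
end

section
/- Let H be a finite type, 𝔐 a finite family of subsets of H, and L its meet-closure. For every x ∈ L, the cardinality of x equals the sum, over y ∈ L with y ⊆ x, of the cardinalities of PEC(y); equivalently, the cardinality of PEC(x) equals the cardinality of x minus the sum of the cardinalities of PEC(y) over y ∈ L with y ⊊ x. -/
open Set

lemma meetClosure_inter {H : Type*} {𝔐 : Set (Set H)} {a b : Set H}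
    (ha : a ∈ meetClosure 𝔐) (hb : b ∈ meetClosure 𝔐) : a ∩ b ∈ meetClosure 𝔐 := by
  obtain ⟨S, hS, rfl⟩ := ha
  obtain ⟨T, hT, rfl⟩ := hb
  exact ⟨S ∪ T, union_subset hS hT, (sInter_union S T).symm⟩

lemma pec_disjoint {H : Type*} {𝔐 : Set (Set H)} {a b : Set H}
    (ha : a ∈ meetClosure 𝔐) (hb : b ∈ meetClosure 𝔐) (hne : a ≠ b) :
    Disjoint (PEC 𝔐 a) (PEC 𝔐 b) := by
  rw [Set.disjoint_left]
  rintro h ⟨hha, hna⟩ ⟨hhb, hnb⟩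
  have hmem : h ∈ a ∩ b := ⟨hha, hhb⟩
  have hL := meetClosure_inter ha hb
  by_cases hab : a ∩ b = a
  · have hba : a ∩ b ⊂ b := by
      refine ssubset_iff_subset_ne.2 ⟨inter_subset_right, fun hE => hne ?_⟩
      rw [← hab, hE]
    exact hnb ⟨a ∩ b, ⟨hL, hba⟩, hmem⟩
  · exact hna ⟨a ∩ b, ⟨hL, ssubset_iff_subset_ne.2 ⟨inter_subset_left, hab⟩⟩, hmem⟩

lemma sum_ncard_disjoint {H : Type*} [Fintype H] (T : Finset (Set H)) (f : Set H → Set H)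
    (hd : ∀ y ∈ T, ∀ z ∈ T, y ≠ z → Disjoint (f y) (f z)) :
    ∑ y ∈ T, (f y).ncard = (⋃ y ∈ T, f y).ncard := by
  classical
  induction T using Finset.induction with
  | empty => simp
  | @insert a s hx ih =>
    rw [Finset.sum_insert hx, Finset.set_biUnion_insert,
      ih (fun y hy z hz => hd y (Finset.mem_insert_of_mem hy) z (Finset.mem_insert_of_mem hz)),
      Set.ncard_union_eq]
    rw [Set.disjoint_iUnion_right]
    intro y
    rw [Set.disjoint_iUnion_right]
    intro hy
    exact hd a (Finset.mem_insert_self a s) y (Finset.mem_insert_of_mem hy)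
      (fun h => hx (h ▸ hy))

/-- The cardinality of a lattice element is the sum of the cardinalities of the
packet equivalence classes of the lattice elements below it; equivalently, the
cardinality of `PEC x` is the cardinality of `x` minus the sum of the
cardinalities of the `PEC y` for lattice elements `y ⊊ x`. -/
theorem ncard_eq_sum_pec_ncard {H : Type*} [Fintype H] (𝔐 : Set (Set H)) :
    ∀ x ∈ meetClosure 𝔐,
      x.ncard = ∑ᶠ y ∈ {y ∈ meetClosure 𝔐 | y ⊆ x}, (PEC 𝔐 y).ncard ∧
      (PEC 𝔐 x).ncard = x.ncard - ∑ᶠ y ∈ {y ∈ meetClosure 𝔐 | y ⊂ x}, (PEC 𝔐 y).ncard := by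
  classical
  intro x hx
  have hfin1 : {y ∈ meetClosure 𝔐 | y ⊆ x}.Finite := Set.toFinite _
  have hfin2 : {y ∈ meetClosure 𝔐 | y ⊂ x}.Finite := Set.toFinite _
  -- first equation
  have hcover : x = ⋃ y ∈ hfin1.toFinset, PEC 𝔐 y := by
    apply Set.Subset.antisymm
    · intro h hh
      set m : Set H := ⋂₀ {P ∈ 𝔐 | h ∈ P} with hm
      have hmL : m ∈ meetClosure 𝔐 := ⟨_, sep_subset _ _, rfl⟩
      have hhm : h ∈ m := fun P hP => hP.2
      have hmin : ∀ y ∈ meetClosure 𝔐, h ∈ y → m ⊆ y := by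
        rintro y ⟨S, hS, rfl⟩ hhy
        intro z hz
        intro P hP
        exact hz P ⟨hS hP, hhy P hP⟩
      have hmx : m ⊆ x := hmin x hx hh
      refine Set.mem_biUnion (hfin1.mem_toFinset.2 ⟨hmL, hmx⟩) ⟨hhm, ?_⟩
      rintro ⟨z, ⟨⟨hzL, hzm⟩, hhz⟩⟩
      exact hzm.not_subset (hmin z hzL hhz)
    · intro h hh
      obtain ⟨y, hy, hhy⟩ := Set.mem_iUnion₂.1 hh
      exact (hfin1.mem_toFinset.1 hy).2 hhy.1
  have hsum1 : x.ncard = ∑ y ∈ hfin1.toFinset, (PEC 𝔐 y).ncard := by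
    conv_lhs => rw [hcover]
    rw [← sum_ncard_disjoint]
    intro y hy z hz hne
    exact pec_disjoint (hfin1.mem_toFinset.1 hy).1 (hfin1.mem_toFinset.1 hz).1 hne
  have e1 : x.ncard = ∑ᶠ y ∈ {y ∈ meetClosure 𝔐 | y ⊆ x}, (PEC 𝔐 y).ncard := by
    rw [finsum_mem_eq_finite_toFinset_sum _ hfin1]; exact hsum1
  refine ⟨e1, ?_⟩
  -- second equation
  have hsplit : hfin1.toFinset = insert x hfin2.toFinset := by
    ext y
    simp only [hfin1.mem_toFinset, hfin2.mem_toFinset, Finset.mem_insert, mem_setOf_eq]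
    constructor
    · rintro ⟨hyL, hyx⟩
      rcases eq_or_ne y x with h | h
      · exact Or.inl h
      · exact Or.inr ⟨hyL, ssubset_iff_subset_ne.2 ⟨hyx, h⟩⟩
    · rintro (rfl | ⟨hyL, hyx⟩)
      · exact ⟨hx, Set.Subset.rfl⟩
      · exact ⟨hyL, hyx.subset⟩
  have hxnot : x ∉ hfin2.toFinset := by
    simp only [hfin2.mem_toFinset, mem_setOf_eq]
    rintro ⟨-, h⟩
    exact h.ne rfl
  rw [finsum_mem_eq_finite_toFinset_sum _ hfin2]
  have := hsum1
  rw [hsplit, Finset.sum_insert hxnot] at this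
  omega
end

section
/- Let H be a finite type, 𝔐 a finite family of subsets of H, and L its meet-closure. For every x ∈ L, PEC(x) = (⋂{P ∈ 𝔐 : x ⊆ P}) \ (⋃{P ∈ 𝔐 : ¬(x ⊆ P)}), where the intersection over the empty collection is H. -/
open Set

/-- `PEC x` is the intersection of the match conditions containing `x` minus
the union of the match conditions not containing `x`. -/
theorem pec_eq_sInter_diff_sUnion {H : Type*} [Fintype H] (𝔐 : Set (Set H)) :
    ∀ x ∈ meetClosure 𝔐,
      PEC 𝔐 x = ⋂₀ {P ∈ 𝔐 | x ⊆ P} \ ⋃₀ {P ∈ 𝔐 | ¬ x ⊆ P} := by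
  rintro x ⟨S, hS, hxS⟩
  have hxA : x = ⋂₀ {P ∈ 𝔐 | x ⊆ P} := by
    apply Subset.antisymm
    · intro h hh P ⟨_, hP⟩; exact hP hh
    · intro h hh
      rw [hxS]
      intro P hP
      exact hh P ⟨hS hP, by rw [hxS]; exact fun a ha => ha P hP⟩
  ext h
  simp only [PEC, mem_diff, mem_sUnion, mem_setOf_eq]
  constructor
  · rintro ⟨hhx, hno⟩
    refine ⟨hxA ▸ hhx, ?_⟩
    rintro ⟨P, ⟨hPM, hxP⟩, hhP⟩
    refine hno ⟨x ∩ P, ⟨⟨S ∪ {P}, union_subset hS (by simpa using hPM), ?_⟩, ?_⟩, hhx, hhP⟩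
    · rw [sInter_union, ← hxS, sInter_singleton]
    · exact ssubset_iff_subset_ne.2 ⟨inter_subset_left,
        fun e => hxP (by rw [← e]; exact inter_subset_right)⟩
  · rintro ⟨hhi, hhu⟩
    have hhx : h ∈ x := hxA ▸ hhi
    refine ⟨hhx, ?_⟩
    rintro ⟨y, ⟨⟨T, hT, rfl⟩, hsub⟩, hhy⟩
    obtain ⟨P, hPT, hxP⟩ : ∃ P ∈ T, ¬ x ⊆ P := by
      by_contra hc
      push_neg at hc
      exact hsub.ne.symm (Subset.antisymm (fun a ha P hP => hc P hP ha) hsub.subset)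
    exact hhu ⟨P, ⟨hT hPT, hxP⟩, hhy P hPT⟩
end

section
/- Let H be a finite type, 𝔐 a finite family of subsets of H, and L its meet-closure. If p ∈ PEC(x) for some x ∈ L, then PEC(x) equals the cell of p with respect to 𝔐. -/
open Set

/-- The cell of a point `p` with respect to `𝔐`: all points lying in exactly
the same members of `𝔐` as `p`. -/
def cell {H : Type*} (𝔐 : Set (Set H)) (p : H) : Set H :=
  {q | ∀ P ∈ 𝔐, q ∈ P ↔ p ∈ P}

/-- If `p` lies in the packet equivalence class of some lattice element `x`,
then that packet equivalence class is exactly the cell of `p`. -/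
theorem pec_eq_cell_of_mem {H : Type*} [Fintype H] (𝔐 : Set (Set H))
    (x : Set H) (hx : x ∈ meetClosure 𝔐) (p : H) (hp : p ∈ PEC 𝔐 x) :
    PEC 𝔐 x = cell 𝔐 p := by
  obtain ⟨hpx, hpn⟩ := hp
  obtain ⟨S, hS𝔐, rfl⟩ := hx
  -- any P ∈ 𝔐 containing p must contain all of ⋂₀ S
  have key : ∀ P ∈ 𝔐, p ∈ P → ⋂₀ S ⊆ P := by
    intro P hP hpP
    have hmem : ⋂₀ S ∩ P ∈ meetClosure 𝔐 :=
      ⟨insert P S, insert_subset hP hS𝔐, by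
        rw [sInter_insert]; exact (inter_comm _ _)⟩
    by_contra hns
    have hss : ⋂₀ S ∩ P ⊂ ⋂₀ S :=
      ⟨inter_subset_left, fun h => hns fun q hq => (h hq).2⟩
    exact hpn ⟨⋂₀ S ∩ P, ⟨hmem, hss⟩, hpx, hpP⟩
  ext q
  constructor
  · rintro ⟨hqx, hqn⟩ P hP
    constructor
    · intro hqP
      by_contra hpP
      have hmem : ⋂₀ S ∩ P ∈ meetClosure 𝔐 :=
        ⟨insert P S, insert_subset hP hS𝔐, by
          rw [sInter_insert]; exact (inter_comm _ _)⟩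
      have hss : ⋂₀ S ∩ P ⊂ ⋂₀ S :=
        ⟨inter_subset_left, fun h => hpP (h hpx).2⟩
      exact hqn ⟨⋂₀ S ∩ P, ⟨hmem, hss⟩, hqx, hqP⟩
    · intro hpP
      exact key P hP hpP hqx
  · intro hq
    refine ⟨fun P hPS => (hq P (hS𝔐 hPS)).2 (hpx P hPS), ?_⟩
    rintro ⟨y, ⟨⟨T, hT𝔐, rfl⟩, hsub⟩, hqy⟩
    have hpy : p ∈ ⋂₀ T := fun P hPT => (hq P (hT𝔐 hPT)).1 (hqy P hPT)
    exact hpn ⟨⋂₀ T, ⟨⟨T, hT𝔐, rfl⟩, hsub⟩, hpy⟩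
end

section
/- Let H be a finite type, 𝔐 a finite family of subsets of H, and L its meet-closure. For every p ∈ H, let x_p := ⋂{P ∈ 𝔐 : p ∈ P} (with the empty intersection equal to H). Then x_p ∈ L and the cell of p with respect to 𝔐 equals PEC(x_p). Consequently, the collection of nonempty packet equivalence classes {PEC(x) : x ∈ L, PEC(x) ≠ ∅} equals the collection of cells of 𝔐. -/
open Set

/-- For every point `p`, the intersection `x_p` of the match conditions
containing `p` is a lattice element whose packet equivalence class is the cell
of `p`; consequently the nonempty packet equivalence classes are exactly the
cells of `𝔐`. -/
theorem cells_eq_nonempty_pecs {H : Type*} [Fintype H] (𝔐 : Set (Set H)) :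
    (∀ p : H, ⋂₀ {P ∈ 𝔐 | p ∈ P} ∈ meetClosure 𝔐 ∧
      cell 𝔐 p = PEC 𝔐 (⋂₀ {P ∈ 𝔐 | p ∈ P})) ∧
    {s : Set H | s.Nonempty ∧ ∃ x ∈ meetClosure 𝔐, s = PEC 𝔐 x} =
      {s : Set H | ∃ p : H, s = cell 𝔐 p} := by
  classical
  have hmem : ∀ p : H, ⋂₀ {P ∈ 𝔐 | p ∈ P} ∈ meetClosure 𝔐 := fun p =>
    ⟨{P ∈ 𝔐 | p ∈ P}, fun P hP => hP.1, rfl⟩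
  have hpx : ∀ p : H, p ∈ ⋂₀ {P ∈ 𝔐 | p ∈ P} := fun p P hP => hP.2
  have hcell : ∀ p : H, cell 𝔐 p = PEC 𝔐 (⋂₀ {P ∈ 𝔐 | p ∈ P}) := by
    intro p
    ext q
    constructor
    · intro hq
      have hxq : ⋂₀ {P ∈ 𝔐 | q ∈ P} = ⋂₀ {P ∈ 𝔐 | p ∈ P} := by
        have h : {P ∈ 𝔐 | q ∈ P} = {P ∈ 𝔐 | p ∈ P} := by
          ext P
          exact and_congr_right fun hP => hq P hP
        rw [h]
      refine ⟨hxq ▸ hpx q, ?_⟩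
      rintro ⟨y, ⟨⟨S, hS, rfl⟩, hsub', hne⟩, hqy⟩
      apply hne
      rw [← hxq]
      intro r hr P' hP'
      exact hr P' ⟨hS hP', hqy P' hP'⟩
    · rintro ⟨hqx, hq⟩ P hP
      constructor
      · intro hqP
        by_contra hpP
        refine hq ⟨⋂₀ {Q ∈ 𝔐 | p ∈ Q} ∩ P, ⟨⟨insert P {Q ∈ 𝔐 | p ∈ Q}, ?_, ?_⟩, ?_, ?_⟩, hqx, hqP⟩
        · intro Q hQ
          rcases hQ with rfl | hQ
          · exact hP
          · exact hQ.1
        · rw [sInter_insert, inter_comm]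
        · exact inter_subset_left
        · exact fun h => hpP (h (hpx p)).2
      · intro hpP
        exact hqx P ⟨hP, hpP⟩
  refine ⟨fun p => ⟨hmem p, hcell p⟩, ?_⟩
  ext s
  simp only [mem_setOf_eq]
  constructor
  · rintro ⟨⟨p, hp⟩, x, hx, rfl⟩
    refine ⟨p, ?_⟩
    obtain ⟨S, hS, rfl⟩ := hx
    have hpS : p ∈ ⋂₀ S := hp.1
    have h1 : ⋂₀ {P ∈ 𝔐 | p ∈ P} ⊆ ⋂₀ S := fun r hr P hP => hr P ⟨hS hP, hpS P hP⟩
    have h2 : ⋂₀ S = ⋂₀ {P ∈ 𝔐 | p ∈ P} := by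
      by_contra hne
      exact hp.2 ⟨_, ⟨hmem p, h1, fun h => hne (subset_antisymm h h1)⟩, hpx p⟩
    rw [h2, ← hcell p]
  · rintro ⟨p, rfl⟩
    exact ⟨⟨p, fun P hP => Iff.rfl⟩, _, hmem p, hcell p⟩
end

section
/- Let H be a finite type, 𝔐 a finite family of subsets of H, and A a family of subsets of H such that every member of A is nonempty, distinct members of A are disjoint, the union of A is H, and every nonempty P ∈ 𝔐 is a union of members of A. Then the cardinality of A is at least the number of cells of 𝔐. -/
open Set

/-- Any family of nonempty, pairwise-disjoint sets covering `H` such that every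
nonempty `P ∈ 𝔐` is a union of members has at least as many members as there
are cells of `𝔐`. -/
theorem cells_ncard_le {H : Type*} [Fintype H]
    (𝔐 : Set (Set H)) (A : Set (Set H))
    (h1 : ∀ a ∈ A, a.Nonempty)
    (h2 : ⋃₀ A = Set.univ)
    (h3 : A.Pairwise Disjoint)
    (h4 : ∀ P ∈ 𝔐, P.Nonempty → ∃ B ⊆ A, P = ⋃₀ B) :
    {s : Set H | ∃ p : H, s = cell 𝔐 p}.ncard ≤ A.ncard := by
  classical
  -- points lying in the same member of A lie in the same members of 𝔐
  have key : ∀ a ∈ A, ∀ p ∈ a, ∀ q ∈ a, ∀ P ∈ 𝔐, p ∈ P → q ∈ P := by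
    intro a ha p hp q hq P hP hpP
    obtain ⟨B, hBA, rfl⟩ := h4 P hP ⟨p, hpP⟩
    obtain ⟨b, hb, hpb⟩ := hpP
    have hba : b = a := by
      by_contra hne
      exact ((h3 (hBA hb) ha hne).le_bot ⟨hpb, hp⟩).elim
    exact ⟨b, hb, by rw [hba]; exact hq⟩
  have hpick : ∀ p : H, ∃ a ∈ A, p ∈ a := by
    intro p
    have : p ∈ ⋃₀ A := h2.symm ▸ Set.mem_univ p
    exact this
  choose pick hpickA hpickmem using hpick
  set F : Set H → Set H := fun s =>
    if h : ∃ p, s = cell 𝔐 p then pick h.choose else ∅ with hF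
  apply Set.ncard_le_ncard_of_injOn F
  · intro s hs
    obtain ⟨p, hp⟩ := hs
    simp only [hF]
    rw [dif_pos ⟨p, hp⟩]
    exact hpickA _
  · intro s hs t ht hst
    obtain ⟨p, hp⟩ := hs
    obtain ⟨q, hq⟩ := ht
    simp only [hF] at hst
    rw [dif_pos ⟨p, hp⟩, dif_pos ⟨q, hq⟩] at hst
    set p' := (⟨p, hp⟩ : ∃ p, s = cell 𝔐 p).choose with hp'
    set q' := (⟨q, hq⟩ : ∃ p, t = cell 𝔐 p).choose with hq'
    have hs' : s = cell 𝔐 p' := (⟨p, hp⟩ : ∃ p, s = cell 𝔐 p).choose_spec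
    have ht' : t = cell 𝔐 q' := (⟨q, hq⟩ : ∃ p, t = cell 𝔐 p).choose_spec
    have hmem : q' ∈ pick p' := hst ▸ hpickmem q'
    have hsame : ∀ P ∈ 𝔐, p' ∈ P ↔ q' ∈ P := by
      intro P hP
      constructor
      · exact key _ (hpickA p') _ (hpickmem p') _ hmem P hP
      · exact key _ (hpickA p') _ hmem _ (hpickmem p') P hP
    rw [hs', ht']
    ext r
    simp only [cell, Set.mem_setOf_eq]
    exact ⟨fun h P hP => (h P hP).trans (hsame P hP),
           fun h P hP => (h P hP).trans (hsame P hP).symm⟩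
end

section
/- Let H be a finite nonempty type and 𝔐 a finite family of subsets of H. The set of atomic predicates for 𝔐 is unique: any family A of subsets of H satisfying conditions (1)–(5) of atomic predicates equals the collection of cells of 𝔐. -/
open Set

lemma mem_cell_self {H : Type*} (𝔐 : Set (Set H)) (p : H) : p ∈ cell 𝔐 p :=
  fun _ _ => Iff.rfl

lemma cell_eq_of_mem {H : Type*} {𝔐 : Set (Set H)} {p q : H} (h : q ∈ cell 𝔐 p) :
    cell 𝔐 q = cell 𝔐 p := by
  ext r
  constructor
  · intro hr P hP; exact (hr P hP).trans (h P hP)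
  · intro hr P hP; exact (hr P hP).trans (h P hP).symm

lemma subset_cell {H : Type*} {𝔐 A : Set (Set H)} (hdisj : A.Pairwise Disjoint)
    (href : ∀ P ∈ 𝔐, P.Nonempty → ∃ B ⊆ A, P = ⋃₀ B) {a : Set H} (ha : a ∈ A)
    {p : H} (hp : p ∈ a) : a ⊆ cell 𝔐 p := by
  have step : ∀ x ∈ a, ∀ y ∈ a, ∀ P ∈ 𝔐, x ∈ P → y ∈ P := by
    intro x hx y hy P hP hxP
    obtain ⟨B, hBA, rfl⟩ := href P hP ⟨x, hxP⟩
    obtain ⟨b, hb, hxb⟩ := hxP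
    have hab : a = b := by
      by_contra hne
      exact Set.disjoint_left.mp (hdisj ha (hBA hb) hne) hx hxb
    exact ⟨b, hb, hab ▸ hy⟩
  intro q hq P hP
  exact ⟨fun h => step q hq p hp P hP h, fun h => step p hp q hq P hP h⟩

/-- Atomic predicates are unique: any family satisfying conditions (1)–(5)
equals the collection of cells of `𝔐`. -/
theorem atomicPredicates_unique {H : Type*} [Fintype H] [Nonempty H]
    (𝔐 : Set (Set H)) (A : Set (Set H)) (hA : IsAtomicPredicates 𝔐 A) :
    A = {s : Set H | ∃ p : H, s = cell 𝔐 p} := by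
  classical
  obtain ⟨hA1, hA2, hA3, hA4, hA5⟩ := hA
  set C : Set (Set H) := {s : Set H | ∃ p : H, s = cell 𝔐 p} with hC
  -- C satisfies (1)-(4)
  have hC1 : ∀ s ∈ C, s.Nonempty := by
    rintro s ⟨p, rfl⟩; exact ⟨p, mem_cell_self 𝔐 p⟩
  have hC2 : ⋃₀ C = Set.univ :=
    Set.eq_univ_of_forall fun p => ⟨cell 𝔐 p, ⟨p, rfl⟩, mem_cell_self 𝔐 p⟩
  have hC3 : C.Pairwise Disjoint := by
    rintro s ⟨p, rfl⟩ t ⟨q, rfl⟩ hne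
    refine Set.disjoint_left.mpr fun x hxp hxq => hne ?_
    rw [← cell_eq_of_mem hxp, cell_eq_of_mem hxq]
  have hC4 : ∀ P ∈ 𝔐, P.Nonempty → ∃ B ⊆ C, P = ⋃₀ B := by
    intro P hP _
    refine ⟨{s | ∃ p ∈ P, s = cell 𝔐 p}, ?_, ?_⟩
    · rintro s ⟨p, _, rfl⟩; exact ⟨p, rfl⟩
    · ext q
      constructor
      · intro hq; exact ⟨cell 𝔐 q, ⟨q, hq, rfl⟩, mem_cell_self 𝔐 q⟩
      · rintro ⟨s, ⟨p, hpP, rfl⟩, hq⟩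
        exact (hq P hP).mpr hpP
  -- the map from A to cells
  set F : Set H → Set H := fun a => if h : a.Nonempty then cell 𝔐 h.some else ∅ with hF
  have hFa : ∀ a ∈ A, ∃ p ∈ a, F a = cell 𝔐 p := by
    intro a ha
    exact ⟨(hA1 a ha).some, (hA1 a ha).some_mem, dif_pos (hA1 a ha)⟩
  have hFa' : ∀ a ∈ A, ∀ x ∈ a, F a = cell 𝔐 x := by
    intro a ha x hx
    obtain ⟨p, hp, hFeq⟩ := hFa a ha
    rw [hFeq, ← cell_eq_of_mem (subset_cell hA3 hA4 ha hp hx)]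
  have hmem : ∀ q : H, ∃ a ∈ A, q ∈ a := by
    intro q
    have : q ∈ ⋃₀ A := hA2 ▸ Set.mem_univ q
    exact this
  have himg : C = F '' A := by
    ext s
    constructor
    · rintro ⟨q, rfl⟩
      obtain ⟨a, ha, hqa⟩ := hmem q
      exact ⟨a, ha, hFa' a ha q hqa⟩
    · rintro ⟨a, ha, rfl⟩
      obtain ⟨p, _, hFeq⟩ := hFa a ha
      exact ⟨p, hFeq⟩
  have hAfin : A.Finite := Set.toFinite A
  have hle1 : C.ncard ≤ A.ncard := by
    rw [himg]; exact Set.ncard_image_le hAfin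
  have hle2 : A.ncard ≤ C.ncard := hA5 C hC1 hC2 hC3 hC4
  have hcard : (F '' A).ncard = A.ncard := by
    rw [← himg]; exact le_antisymm hle1 hle2
  have hinj : Set.InjOn F A := Set.injOn_of_ncard_image_eq hcard hAfin
  -- each a equals F a
  have haF : ∀ a ∈ A, a = F a := by
    intro a ha
    obtain ⟨p, hp, hFeq⟩ := hFa a ha
    apply Set.Subset.antisymm
    · rw [hFeq]; exact subset_cell hA3 hA4 ha hp
    · intro x hx
      obtain ⟨a', ha', hxa'⟩ := hmem x
      have h1 : F a' = cell 𝔐 x := hFa' a' ha' x hxa'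
      have h2 : cell 𝔐 x = F a := by
        rw [hFeq] at hx ⊢
        exact cell_eq_of_mem hx
      have : a' = a := hinj ha' ha (h1.trans h2)
      exact this ▸ hxa'
  ext s
  constructor
  · intro hs
    rw [himg]
    exact ⟨s, hs, (haF s hs).symm⟩
  · intro hs
    rw [himg] at hs
    obtain ⟨a, ha, rfl⟩ := hs
    exact (haF a ha) ▸ ha
end
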